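/- Let m ≥ 1, let K be a symmetric real m × m matrix, and let F ⊆ Fin m with |F| = k ≥ 1. Let S_F denote the set of permutations of Fin m fixing every element outside F, and for ς ∈ S_F let M_ς be its permutation matrix ((M_ς)_{i,j} = 1 iff j = ς(i)). Then the uniform average over ς ∈ S_F of trace((I_m − M_ς)ᵀ (I_m − M_ς) K) equals (1/k) · Σ_{(i,i') ∈ F × F, i ≠ i'} (K_{i,i} + K_{i',i'} − 2·K_{i,i'}). In particular, when K is the Gram matrix of points x : Fin m → ℝ^d (K_{i,i'} = ⟨x_i, x_{i'}⟩), this average equals (1/k) · Σ_{(i,i') ∈ F × F, i ≠ i'} ‖x_i − x_{i'}‖₂². -/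

import Mathlib

open Matrix

/-- The `m × m` permutation matrix of a permutation `σ` of `Fin m`:
entry `(i, j)` is `1` iff `j = σ i`. -/
noncomputable def permMat (m : ℕ) (σ : Equiv.Perm (Fin m)) : Matrix (Fin m) (Fin m) ℝ :=
  Matrix.of fun i j => if σ i = j then 1 else 0

lemma permMat_tmul (m : ℕ) (σ : Equiv.Perm (Fin m)) :
    (permMat m σ)ᵀ * permMat m σ = 1 := by
  ext i j
  simp only [permMat, Matrix.mul_apply, Matrix.transpose_apply, Matrix.of_apply,
    Matrix.one_apply, ite_mul, one_mul, zero_mul]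
  rw [Finset.sum_eq_single (σ⁻¹ i)]
  · simp [Equiv.Perm.eq_inv_iff_eq, eq_comm]
  · intro b _ hb
    rw [if_neg]
    intro h
    exact hb (by rw [← h]; simp)
  · simp

lemma trace_mul_perm (m : ℕ) (σ : Equiv.Perm (Fin m)) (K : Matrix (Fin m) (Fin m) ℝ) :
    Matrix.trace (permMat m σ * K) = ∑ i, K (σ i) i := by
  simp only [Matrix.trace, Matrix.diag_apply, Matrix.mul_apply, permMat, Matrix.of_apply,
    ite_mul, one_mul, zero_mul]
  exact Finset.sum_congr rfl fun i _ => by simp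

lemma trace_tperm_mul (m : ℕ) (σ : Equiv.Perm (Fin m)) (K : Matrix (Fin m) (Fin m) ℝ)
    (hK : K.IsSymm) :
    Matrix.trace ((permMat m σ)ᵀ * K) = ∑ i, K (σ i) i := by
  simp only [Matrix.trace, Matrix.diag_apply, Matrix.mul_apply, permMat, Matrix.of_apply,
    Matrix.transpose_apply, ite_mul, one_mul, zero_mul]
  have h1 : ∀ i : Fin m, (∑ j, if σ j = i then K j i else 0) = K (σ⁻¹ i) i := by
    intro i
    rw [Finset.sum_eq_single (σ⁻¹ i)]
    · simp
    · intro b _ hb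
      rw [if_neg]; intro h; exact hb (by rw [← h]; simp)
    · simp
  rw [Finset.sum_congr rfl fun i _ => h1 i]
  have h2 : ∀ i : Fin m, K (σ⁻¹ i) i = K i (σ⁻¹ i) := by
    intro i; rw [← hK.apply]
  rw [Finset.sum_congr rfl fun i _ => h2 i, ← Equiv.sum_comp σ (fun i => K i (σ⁻¹ i))]
  simp

lemma trace_expand (m : ℕ) (σ : Equiv.Perm (Fin m)) (K : Matrix (Fin m) (Fin m) ℝ)
    (hK : K.IsSymm) :
    Matrix.trace ((1 - permMat m σ)ᵀ * (1 - permMat m σ) * K)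
      = 2 * ∑ i, (K i i - K (σ i) i) := by
  set M := permMat m σ
  have hexp : (1 - M)ᵀ * (1 - M) = 1 + 1 - M - Mᵀ := by
    rw [Matrix.transpose_sub, Matrix.transpose_one, Matrix.sub_mul, Matrix.mul_sub,
      Matrix.mul_sub, permMat_tmul]
    noncomm_ring
  rw [hexp, Matrix.sub_mul, Matrix.sub_mul, Matrix.add_mul, Matrix.one_mul,
    Matrix.trace_sub, Matrix.trace_sub, Matrix.trace_add,
    trace_mul_perm, trace_tperm_mul m σ K hK]
  simp only [Matrix.trace, Matrix.diag_apply, Finset.mul_sum, Finset.sum_sub_distrib]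
  ring

section Count
variable {m : ℕ} (F : Finset (Fin m))

abbrev SF (F : Finset (Fin m)) : Finset (Equiv.Perm (Fin m)) :=
  (Finset.univ).filter (fun ς => ∀ i ∉ F, ς i = i)

lemma mem_SF_maps {σ : Equiv.Perm (Fin m)} (hσ : σ ∈ SF F) {i : Fin m} (hi : i ∈ F) :
    σ i ∈ F := by
  by_contra h
  have h2 := (Finset.mem_filter.mp hσ).2 (σ i) h
  rw [σ.injective h2] at h
  exact h hi

lemma count_const {i j j' : Fin m} (hi : i ∈ F) (hj : j ∈ F) (hj' : j' ∈ F) :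
    ((SF F).filter fun σ => σ i = j).card = ((SF F).filter fun σ => σ i = j').card := by
  apply Finset.card_bij' (fun σ _ => Equiv.swap j j' * σ) (fun σ _ => Equiv.swap j j' * σ)
  · intro σ hσ
    obtain ⟨hσS, hσi⟩ := Finset.mem_filter.mp hσ
    obtain ⟨-, hfix⟩ := Finset.mem_filter.mp hσS
    refine Finset.mem_filter.mpr ⟨Finset.mem_filter.mpr ⟨Finset.mem_univ _, ?_⟩, ?_⟩
    · intro a ha
      simp only [Equiv.Perm.mul_apply, hfix a ha]
      exact Equiv.swap_apply_of_ne_of_ne (fun h => ha (h ▸ hj)) (fun h => ha (h ▸ hj'))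
    · simp [Equiv.Perm.mul_apply, hσi]
  · intro σ hσ
    obtain ⟨hσS, hσi⟩ := Finset.mem_filter.mp hσ
    obtain ⟨-, hfix⟩ := Finset.mem_filter.mp hσS
    refine Finset.mem_filter.mpr ⟨Finset.mem_filter.mpr ⟨Finset.mem_univ _, ?_⟩, ?_⟩
    · intro a ha
      simp only [Equiv.Perm.mul_apply, hfix a ha]
      exact Equiv.swap_apply_of_ne_of_ne (fun h => ha (h ▸ hj)) (fun h => ha (h ▸ hj'))
    · simp [Equiv.Perm.mul_apply, hσi, Equiv.swap_apply_right]
  · intro σ _; ext a; simp [Equiv.Perm.mul_apply, Equiv.swap_apply_self]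
  · intro σ _; ext a; simp [Equiv.Perm.mul_apply, Equiv.swap_apply_self]

lemma card_fibers {i : Fin m} (hi : i ∈ F) :
    (SF F).card = ∑ j ∈ F, ((SF F).filter fun σ => σ i = j).card :=
  Finset.card_eq_sum_card_fiberwise (fun σ hσ => mem_SF_maps F hσ hi)

lemma count_val {i j : Fin m} (hi : i ∈ F) (hj : j ∈ F) :
    F.card * ((SF F).filter fun σ => σ i = j).card = (SF F).card := by
  rw [card_fibers F hi,
    Finset.sum_congr rfl (fun j' hj' => count_const F hi hj' hj),
    Finset.sum_const, smul_eq_mul]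

end Count

lemma stmt11_main (m : ℕ) (K : Matrix (Fin m) (Fin m) ℝ) (hK : K.IsSymm)
    (F : Finset (Fin m)) (k : ℕ) (hkcard : F.card = k) (hk1 : 1 ≤ k) :
    (((SF F).card : ℝ)⁻¹ *
      ∑ ς ∈ SF F, Matrix.trace ((1 - permMat m ς)ᵀ * (1 - permMat m ς) * K)
      = (1 / (k : ℝ)) * ∑ p ∈ F.offDiag, (K p.1 p.1 + K p.2 p.2 - 2 * K p.1 p.2)) := by
  have hone : (1 : Equiv.Perm (Fin m)) ∈ SF F :=
    Finset.mem_filter.mpr ⟨Finset.mem_univ _, fun i _ => rfl⟩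
  have hn : (0 : ℕ) < (SF F).card := Finset.card_pos.mpr ⟨1, hone⟩
  have hnR : ((SF F).card : ℝ) ≠ 0 := by exact_mod_cast hn.ne'
  have hkR : (k : ℝ) ≠ 0 := by exact_mod_cast (Nat.one_le_iff_ne_zero.mp hk1)
  set n : ℝ := ((SF F).card : ℝ) with hn_def
  set A : ℝ := ∑ i ∈ F, K i i with hA
  set B : ℝ := ∑ i ∈ F, ∑ j ∈ F, K j i with hB
  -- inner sum over σ for fixed i
  have hinner : ∀ i ∈ F, ∑ σ ∈ SF F, K (σ i) i = (n / k) * ∑ j ∈ F, K j i := by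
    intro i hi
    rw [← Finset.sum_fiberwise_of_maps_to (g := fun σ => σ i) (t := F)
        (fun σ hσ => mem_SF_maps F hσ hi) (fun σ => K (σ i) i)]
    rw [Finset.mul_sum]
    refine Finset.sum_congr rfl fun j hj => ?_
    have : ∑ σ ∈ (SF F).filter (fun σ => σ i = j), K (σ i) i
        = (((SF F).filter (fun σ => σ i = j)).card : ℝ) * K j i := by
      rw [Finset.sum_congr rfl (fun σ hσ => by
        rw [(Finset.mem_filter.mp hσ).2]), Finset.sum_const, nsmul_eq_mul]
    rw [this]
    congr 1
    have hcv := count_val F hi hj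
    have h2 : (F.card : ℝ) * (((SF F).filter (fun σ => σ i = j)).card : ℝ)
        = ((SF F).card : ℝ) := by exact_mod_cast hcv
    have hk' : (F.card : ℝ) = (k : ℝ) := by exact_mod_cast hkcard
    rw [hk', ← hn_def] at h2
    field_simp
    linarith [h2]
  -- total sum over σ
  have hsum : ∑ ς ∈ SF F, Matrix.trace ((1 - permMat m ς)ᵀ * (1 - permMat m ς) * K)
      = 2 * (n * A - (n / k) * B) := by
    have h1 : ∀ σ ∈ SF F,
        Matrix.trace ((1 - permMat m σ)ᵀ * (1 - permMat m σ) * K)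
          = 2 * ∑ i ∈ F, (K i i - K (σ i) i) := by
      intro σ hσ
      rw [trace_expand m σ K hK]
      congr 1
      rw [← Finset.sum_subset (Finset.subset_univ F)]
      intro i _ hi
      rw [(Finset.mem_filter.mp hσ).2 i hi, sub_self]
    rw [Finset.sum_congr rfl h1, ← Finset.mul_sum]
    congr 1
    rw [Finset.sum_comm]
    simp only [Finset.sum_sub_distrib]
    have e1 : ∑ i ∈ F, ∑ _σ ∈ SF F, K i i = n * A := by
      rw [hA, Finset.mul_sum]
      exact Finset.sum_congr rfl fun i _ => by rw [Finset.sum_const, nsmul_eq_mul]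
    have e2 : ∑ i ∈ F, ∑ σ ∈ SF F, K (σ i) i = (n / k) * B := by
      rw [Finset.sum_congr rfl hinner, hB, Finset.mul_sum]
    rw [e1, e2]
  -- RHS sum over offDiag equals sum over product
  have hBsym : ∑ i ∈ F, ∑ j ∈ F, K i j = B := by rw [hB]; exact Finset.sum_comm
  have hoff : ∑ p ∈ F.offDiag, (K p.1 p.1 + K p.2 p.2 - 2 * K p.1 p.2)
      = 2 * k * A - 2 * B := by
    have hsub : F.offDiag ⊆ F ×ˢ F := fun p hp =>
      Finset.mem_product.mpr ⟨(Finset.mem_offDiag.mp hp).1, (Finset.mem_offDiag.mp hp).2.1⟩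
    have hzero : ∀ p ∈ F ×ˢ F, p ∉ F.offDiag →
        (K p.1 p.1 + K p.2 p.2 - 2 * K p.1 p.2) = 0 := by
      intro p hp hnp
      obtain ⟨h1, h2⟩ := Finset.mem_product.mp hp
      have hpe : p.1 = p.2 := by
        by_contra h; exact hnp (Finset.mem_offDiag.mpr ⟨h1, h2, h⟩)
      rw [hpe]; ring
    rw [Finset.sum_subset hsub hzero, Finset.sum_product]
    have hrow : ∀ i ∈ F, ∑ j ∈ F, (K i i + K j j - 2 * K i j)
        = k * K i i + A - 2 * ∑ j ∈ F, K i j := by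
      intro i _
      rw [Finset.sum_sub_distrib, Finset.sum_add_distrib, Finset.sum_const, nsmul_eq_mul,
        hkcard, ← Finset.mul_sum, hA]
    rw [Finset.sum_congr rfl hrow, Finset.sum_sub_distrib, Finset.sum_add_distrib,
      Finset.sum_const, nsmul_eq_mul, hkcard, ← Finset.mul_sum, ← Finset.mul_sum, ← hA, hBsym]
    ring
  rw [hsum, hoff]
  field_simp

/-- the expectation computation at the heart of Theorem 9 `thexpradcomp`.
Averaging `trace((I - M_ς)ᵀ (I - M_ς) K)` uniformly over the permutations `ς` fixing
everything outside a `k`-element set `F` gives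
`(1/k) ∑_{(i,i') ∈ F×F, i≠i'} (K_{ii} + K_{i'i'} - 2 K_{ii'})`, which for a Gram matrix is
`(1/k) ∑_{(i,i') ∈ F×F, i≠i'} ‖x_i - x_{i'}‖²`. -/
theorem stmt11 (m : ℕ) (hm : 1 ≤ m) (K : Matrix (Fin m) (Fin m) ℝ) (hK : K.IsSymm)
    (F : Finset (Fin m)) (k : ℕ) (hkcard : F.card = k) (hk1 : 1 ≤ k) :
    ((((Finset.univ : Finset (Equiv.Perm (Fin m))).filter
        (fun ς => ∀ i ∉ F, ς i = i)).card : ℝ)⁻¹ *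
      ∑ ς ∈ (Finset.univ : Finset (Equiv.Perm (Fin m))).filter (fun ς => ∀ i ∉ F, ς i = i),
        Matrix.trace ((1 - permMat m ς)ᵀ * (1 - permMat m ς) * K)
      = (1 / (k : ℝ)) * ∑ p ∈ F.offDiag, (K p.1 p.1 + K p.2 p.2 - 2 * K p.1 p.2)) ∧
    (∀ (d : ℕ) (x : Fin m → EuclideanSpace ℝ (Fin d)),
      (∀ i i', K i i' = (inner ℝ (x i) (x i') : ℝ)) →
      ((((Finset.univ : Finset (Equiv.Perm (Fin m))).filter
          (fun ς => ∀ i ∉ F, ς i = i)).card : ℝ)⁻¹ *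
        ∑ ς ∈ (Finset.univ : Finset (Equiv.Perm (Fin m))).filter (fun ς => ∀ i ∉ F, ς i = i),
          Matrix.trace ((1 - permMat m ς)ᵀ * (1 - permMat m ς) * K)
        = (1 / (k : ℝ)) * ∑ p ∈ F.offDiag, ‖x p.1 - x p.2‖ ^ 2)) := by
  have hmain := stmt11_main m K hK F k hkcard hk1
  refine ⟨hmain, fun d x hx => ?_⟩
  rw [hmain]
  congr 1
  refine Finset.sum_congr rfl fun p _ => ?_
  rw [hx, hx, hx, real_inner_self_eq_norm_sq, real_inner_self_eq_norm_sq,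
    norm_sub_sq_real]
  ring
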